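/- Fix ℓ ∈ ½ℕ with 2ℓ ≥ 1 and α ∈ ℝ. Let C_α be the (2ℓ+1)×(2ℓ+1) tridiagonal matrix with entries (C_α)_{n,n+1} = -(2ℓ-n)(2ℓ+α)/(4ℓ), (C_α)_{n,n} = ((2ℓ+α)(2ℓ-n) + n(2ℓ-α))/(4ℓ) + 3/2, (C_α)_{n,n-1} = -(2ℓ-α)n/(4ℓ). Then C_α is diagonalizable with eigenvalues (2j+3)/2 for j ∈ {0, 1, ..., 2ℓ}. -/
import Mathlib

open Matrix Polynomial Finset

/-- The tridiagonal matrix `C_α` (with `L = 2ℓ`, so `4ℓ = 2L`). -/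
noncomputable def Cmat (L : ℕ) (α : ℝ) : Matrix (Fin (L+1)) (Fin (L+1)) ℝ :=
  Matrix.of fun i j =>
    if (j:ℕ) = (i:ℕ)+1 then -(((L:ℝ)-(i:ℕ))*((L:ℝ)+α))/(2*(L:ℝ))
    else if (i:ℕ) = (j:ℕ)+1 then -(((L:ℝ)-α)*((i:ℕ):ℝ))/(2*(L:ℝ))
    else if i = j then
      (((L:ℝ)+α)*((L:ℝ)-(i:ℕ)) + ((i:ℕ):ℝ)*((L:ℝ)-α))/(2*(L:ℝ)) + 3/2
    else 0

namespace CmatAux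

noncomputable def aP : ℝ[X] := X - Polynomial.C 1
noncomputable def bP (p : ℝ) : ℝ[X] := Polynomial.C p * X + Polynomial.C (1 - p)
noncomputable def FP (p : ℝ) (L j : ℕ) : ℝ[X] := aP ^ j * (bP p) ^ (L - j)

lemma deriv_aP : derivative aP = 1 := by simp [aP]
lemma deriv_bP (p : ℝ) : derivative (bP p) = C p := by simp [bP]

lemma FP_eigen (p : ℝ) (jn Mn : ℕ) :
    C (p * ((jn:ℝ) + Mn)) * (1 - X) * (aP ^ jn * (bP p) ^ Mn)
      + (aP * bP p) * derivative (aP ^ jn * (bP p) ^ Mn)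
      = C (jn : ℝ) * (aP ^ jn * (bP p) ^ Mn) := by
  rw [derivative_mul, derivative_pow, derivative_pow, deriv_aP, deriv_bP]
  rcases jn with _ | j <;> rcases Mn with _ | m <;>
    simp only [Nat.cast_zero, Nat.cast_add, Nat.cast_one, Nat.add_sub_cancel, pow_zero,
      Nat.succ_sub_one, C_0, zero_mul, mul_zero, zero_add, add_zero, mul_one, one_mul,
      pow_succ, C_add, C_mul, C_1, Polynomial.C_eq_natCast, map_ofNat] <;>
    · simp only [aP, bP, C_sub, C_1]; ring

lemma hab (p : ℝ) : aP * bP p = C p * (X*X) + C (1-2*p) * X + C (p-1) := by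
  simp only [aP, bP, C_sub, C_mul, C_add, C_1, map_ofNat]; ring

lemma FP_natDegree_le (p : ℝ) (L j : ℕ) (hj : j ≤ L) : (FP p L j).natDegree ≤ L := by
  refine le_trans natDegree_mul_le ?_
  have ha : aP.natDegree = 1 := natDegree_X_sub_C 1
  have h1 : (aP ^ j).natDegree ≤ j := le_trans natDegree_pow_le (by simp [ha])
  have h2 : ((bP p) ^ (L-j)).natDegree ≤ L - j := by
    refine le_trans natDegree_pow_le ?_
    have hb : (bP p).natDegree ≤ 1 := natDegree_linear_le
    calc (L-j) * (bP p).natDegree ≤ (L-j) * 1 := Nat.mul_le_mul_left _ hb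
    _ = L - j := Nat.mul_one _
  omega

lemma key (L : ℕ) (hL : 1 ≤ L) (α : ℝ) (j m : Fin (L+1)) :
    ∑ n : Fin (L+1), (FP (((L:ℝ)+α)/(2*(L:ℝ))) L (j:ℕ)).coeff (n:ℕ) * Cmat L α n m
      = (2*((j:ℕ):ℝ)+3)/2 * (FP (((L:ℝ)+α)/(2*(L:ℝ))) L (j:ℕ)).coeff (m:ℕ) := by
  have hLR : (1:ℝ) ≤ (L:ℝ) := by exact_mod_cast hL
  have h2L : (2:ℝ)*(L:ℝ) ≠ 0 := by positivity
  set p : ℝ := ((L:ℝ)+α)/(2*(L:ℝ)) with hp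
  set f : ℝ[X] := FP p L (j:ℕ) with hf
  have hjL : (j:ℕ) ≤ L := by omega
  have hv : ∀ n, L < n → f.coeff n = 0 := fun n hn =>
    coeff_eq_zero_of_natDegree_lt (lt_of_le_of_lt (FP_natDegree_le p L _ hjL) hn)
  have PI : C (p * (L:ℝ)) * (1 - X) * f + (aP * bP p) * derivative f = C ((j:ℕ) : ℝ) * f := by
    have h := FP_eigen p (j:ℕ) (L - (j:ℕ))
    have hc : ((j:ℕ):ℝ) + ((L - (j:ℕ) : ℕ):ℝ) = (L:ℝ) := by
      push_cast [Nat.cast_sub hjL]; ring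
    rw [hc] at h
    exact h
  have PI2 : C (p * (L:ℝ)) * f
        + (C p * (X*(X*derivative f)) + C (1-2*p) * (X*derivative f) + C (p-1) * derivative f)
      = C ((j:ℕ) : ℝ) * f + C (p * (L:ℝ)) * (X * f) := by
    linear_combination PI - (derivative f) * hab p
  set A : ℕ → ℝ := fun n => -(((L:ℝ)-(n:ℝ))*((L:ℝ)+α))/(2*(L:ℝ)) with hAdef
  set B : ℕ → ℝ := fun n => -(((L:ℝ)-α)*(n:ℝ))/(2*(L:ℝ)) with hBdef
  set Dg : ℕ → ℝ := fun n =>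
    (((L:ℝ)+α)*((L:ℝ)-(n:ℝ)) + (n:ℝ)*((L:ℝ)-α))/(2*(L:ℝ)) + 3/2 with hDdef
  have hA : ∀ n : ℕ, A n = -(p * ((L:ℝ) - (n:ℝ))) := by
    intro n; simp only [hAdef, hp]; ring
  have h1p : 1 - p = ((L:ℝ)-α)/(2*(L:ℝ)) := by
    rw [hp]; field_simp; ring
  have h12p : 1 - 2*p = (-2*α)/(2*(L:ℝ)) := by
    rw [hp]; field_simp; ring
  have hpL : p * (L:ℝ) = (((L:ℝ)+α)*(L:ℝ))/(2*(L:ℝ)) := by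
    rw [hp]; ring
  have hB : ∀ n : ℕ, B n = -((1-p) * (n:ℝ)) := by
    intro n; simp only [hBdef, h1p]; ring
  have hD : ∀ n : ℕ, Dg n = p*(L:ℝ) + (1-2*p)*(n:ℝ) + 3/2 := by
    intro n; simp only [hDdef, h12p, hpL]; ring
  have hCsplit : ∀ n : Fin (L+1), Cmat L α n m
      = (if (m:ℕ) = (n:ℕ)+1 then A (n:ℕ) else 0)
        + (if (n:ℕ) = (m:ℕ)+1 then B (n:ℕ) else 0)
        + (if (n:ℕ) = (m:ℕ) then Dg (n:ℕ) else 0) := by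
    intro n
    simp only [Cmat, Matrix.of_apply, hAdef, hBdef, hDdef, Fin.ext_iff]
    split_ifs with h1 h2 h3 <;> first | ring1 | (exfalso; omega)
  have hsum : ∑ n : Fin (L+1), f.coeff (n:ℕ) * Cmat L α n m
      = ∑ n ∈ range (L+1),
          ((if (m:ℕ) = n+1 then f.coeff n * A n else 0)
            + (if n = (m:ℕ)+1 then f.coeff n * B n else 0)
            + (if n = (m:ℕ) then f.coeff n * Dg n else 0)) := by
    rw [← Fin.sum_univ_eq_sum_range (fun n =>
          ((if (m:ℕ) = n+1 then f.coeff n * A n else 0)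
            + (if n = (m:ℕ)+1 then f.coeff n * B n else 0)
            + (if n = (m:ℕ) then f.coeff n * Dg n else 0))) (L+1)]
    refine Finset.sum_congr rfl fun n _ => ?_
    rw [hCsplit n]
    simp only [mul_add, mul_ite, mul_zero]
  rw [hsum, Finset.sum_add_distrib, Finset.sum_add_distrib]
  have hS3 : ∑ n ∈ range (L+1), (if n = (m:ℕ) then f.coeff n * Dg n else 0)
      = f.coeff (m:ℕ) * Dg (m:ℕ) := by
    rw [Finset.sum_ite_eq' (range (L+1)) ((m:ℕ)) (fun n => f.coeff n * Dg n)]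
    simp [Finset.mem_range, m.isLt]
  have hS2 : ∑ n ∈ range (L+1), (if n = (m:ℕ)+1 then f.coeff n * B n else 0)
      = f.coeff ((m:ℕ)+1) * B ((m:ℕ)+1) := by
    rw [Finset.sum_ite_eq' (range (L+1)) ((m:ℕ)+1) (fun n => f.coeff n * B n)]
    split_ifs with h
    · rfl
    · rw [hv ((m:ℕ)+1) (by simp [Finset.mem_range] at h; omega)]; ring
  rw [hS2, hS3]
  have hE := congrArg (fun q : ℝ[X] => q.coeff (m:ℕ)) PI2
  simp only [coeff_add, coeff_C_mul] at hE
  rcases hmv : (m:ℕ) with _ | k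
  · -- m = 0
    rw [hmv] at hE
    have hS1 : ∑ n ∈ range (L+1), (if (0:ℕ) = n+1 then f.coeff n * A n else 0) = 0 :=
      Finset.sum_eq_zero (fun n _ => by simp)
    rw [hS1]
    simp only [Polynomial.mul_coeff_zero, coeff_X_zero, zero_mul, mul_zero, coeff_derivative,
      Nat.cast_zero] at hE
    simp only [hA, hB, hD]
    push_cast at hE ⊢
    linear_combination hE
  · -- m = k+1
    rw [hmv] at hE
    have hS1 : ∑ n ∈ range (L+1), (if k+1 = n+1 then f.coeff n * A n else 0)
        = f.coeff k * A k := by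
      have hcong : ∀ n ∈ range (L+1), (if k+1 = n+1 then f.coeff n * A n else 0)
          = (if n = k then f.coeff n * A n else 0) := by
        intro n _; exact if_congr (by omega) rfl rfl
      rw [Finset.sum_congr rfl hcong, Finset.sum_ite_eq' (range (L+1)) k (fun n => f.coeff n * A n)]
      have hk : k ∈ range (L+1) := by
        have := m.isLt; rw [Finset.mem_range]; omega
      simp [hk]
    rw [hS1]
    rcases k with _ | k'
    · -- m = 1
      simp only [coeff_X_mul, Polynomial.mul_coeff_zero, coeff_X_zero, zero_mul, mul_zero,
        coeff_derivative, Nat.cast_zero, Nat.cast_one] at hE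
      simp only [hA, hB, hD]
      push_cast at hE ⊢
      linear_combination hE
    · -- m = k'+2
      simp only [coeff_X_mul, coeff_derivative] at hE
      simp only [hA, hB, hD]
      push_cast at hE ⊢
      linear_combination hE


noncomputable def homP (p : ℝ) (m : ℕ) (P : ℝ[X]) : ℝ[X] :=
  ∑ k ∈ Finset.range (m+1), Polynomial.C (P.coeff k) * (aP ^ k * (bP p) ^ (m - k))

lemma homP_linear_mul (p c d : ℝ) (m : ℕ) (P : ℝ[X]) (hP : P.natDegree ≤ m) :
    homP p (m+1) ((C c * X + C d) * P)
      = (C c * aP + C d * bP p) * homP p m P := by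
  have hexp : (C c * X + C d) * P = C c * (X * P) + C d * P := by ring
  have hcoeff : ∀ k, ((C c * X + C d) * P).coeff k
      = c * (X * P).coeff k + d * P.coeff k := by
    intro k; rw [hexp]; simp [coeff_add, coeff_C_mul]
  unfold homP
  have hco : ∀ k, Polynomial.C (((C c * X + C d) * P).coeff k) * (aP ^ k * (bP p) ^ (m+1-k))
      = C c * C ((X * P).coeff k) * (aP ^ k * (bP p) ^ (m+1-k))
        + C d * C (P.coeff k) * (aP ^ k * (bP p) ^ (m+1-k)) := by
    intro k; rw [hcoeff k, C_add, C_mul, C_mul]; ring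
  rw [Finset.sum_congr rfl (fun k _ => hco k), Finset.sum_add_distrib]
  have hC : ∑ k ∈ range (m+1+1), C c * C ((X * P).coeff k) * (aP ^ k * (bP p) ^ (m+1-k))
      = C c * aP * ∑ k ∈ range (m+1), C (P.coeff k) * (aP ^ k * (bP p) ^ (m-k)) := by
    rw [Finset.sum_range_succ']
    have h0 : (X * P).coeff 0 = 0 := by
      simp [Polynomial.mul_coeff_zero]
    rw [h0]
    simp only [C_0, mul_zero, zero_mul, add_zero]
    rw [Finset.mul_sum]
    apply Finset.sum_congr rfl
    intro k hk
    rw [coeff_X_mul]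
    have h1 : m + 1 - (k + 1) = m - k := by omega
    rw [h1, pow_succ]
    ring
  have hD : ∑ k ∈ range (m+1+1), C d * C (P.coeff k) * (aP ^ k * (bP p) ^ (m+1-k))
      = C d * bP p * ∑ k ∈ range (m+1), C (P.coeff k) * (aP ^ k * (bP p) ^ (m-k)) := by
    rw [Finset.sum_range_succ]
    have htop : P.coeff (m+1) = 0 :=
      coeff_eq_zero_of_natDegree_lt (lt_of_le_of_lt hP (Nat.lt_succ_self m))
    rw [htop]
    simp only [C_0, mul_zero, zero_mul, add_zero]
    rw [Finset.mul_sum]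
    apply Finset.sum_congr rfl
    intro k hk
    have hk' : k ≤ m := by simpa [Nat.lt_succ_iff] using hk
    have h1 : m + 1 - k = (m - k) + 1 := by omega
    rw [h1, pow_succ]
    ring
  rw [hC, hD, add_mul]

lemma homP_pow_mul (p c : ℝ) (n m : ℕ) (P : ℝ[X]) (hP : P.natDegree ≤ m) :
    homP p (n+m) ((C c * X + C 1)^n * P) = (C c * aP + C 1 * bP p)^n * homP p m P := by
  induction n with
  | zero => simp
  | succ k ih =>
    have hre : (C c * X + C 1)^(k+1) * P = (C c * X + C 1) * ((C c * X + C 1)^k * P) := by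
      ring
    have hdeg : ((C c * X + C 1)^k * P).natDegree ≤ k + m := by
      refine le_trans (natDegree_mul_le) (add_le_add ?_ hP)
      refine le_trans (natDegree_pow_le) ?_
      have := natDegree_linear_le (a := c) (b := (1:ℝ))
      nlinarith [this]
    have hs : k + 1 + m = (k + m) + 1 := by omega
    rw [hre, hs, homP_linear_mul p c 1 (k+m) _ hdeg, ih, pow_succ]
    ring

lemma homP_one (p : ℝ) : homP p 0 1 = 1 := by
  simp [homP]

lemma hom_u (p : ℝ) : C (1-p) * aP + C 1 * bP p = X := by
  simp only [aP, bP, C_sub, C_1]; ring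

lemma hom_w (p : ℝ) : C (-p) * aP + C 1 * bP p = 1 := by
  simp only [aP, bP, C_sub, C_1, map_neg]; ring

noncomputable def GP (p : ℝ) (L n : ℕ) : ℝ[X] :=
  (Polynomial.C (1-p) * X + Polynomial.C 1)^n * (Polynomial.C (-p) * X + Polynomial.C 1)^(L-n)

lemma homP_GP (p : ℝ) (L n : ℕ) (hn : n ≤ L) : homP p L (GP p L n) = X ^ n := by
  have h1 : homP p ((L-n) + 0) ((C (-p) * X + C 1)^(L-n) * 1)
      = (C (-p) * aP + C 1 * bP p)^(L-n) * homP p 0 1 :=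
    homP_pow_mul p (-p) (L-n) 0 1 (by simp)
  rw [homP_one, hom_w, one_pow, mul_one, mul_one, Nat.add_zero] at h1
  have h2 : homP p (n + (L-n)) ((C (1-p) * X + C 1)^n * ((C (-p) * X + C 1)^(L-n)))
      = (C (1-p) * aP + C 1 * bP p)^n * homP p (L-n) ((C (-p) * X + C 1)^(L-n)) := by
    refine homP_pow_mul p (1-p) n (L-n) _ ?_
    refine le_trans natDegree_pow_le ?_
    have := natDegree_linear_le (a := -p) (b := (1:ℝ))
    nlinarith [this]
  rw [h1, hom_u, mul_one] at h2
  have : n + (L - n) = L := by omega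
  rw [this] at h2
  exact h2


end CmatAux

open CmatAux in
/-- Lemma 4.2: `C_α` is diagonalizable with eigenvalues `(2j+3)/2`, `j ∈ {0,…,2ℓ}`. -/
theorem Cmat_diagonalizable (L : ℕ) (hL : 1 ≤ L) (α : ℝ) :
    ∃ P : Matrix (Fin (L+1)) (Fin (L+1)) ℝ, IsUnit P ∧
      Cmat L α = P * Matrix.diagonal (fun j : Fin (L+1) => (2*((j:ℕ):ℝ)+3)/2) * P⁻¹ := by
  set p : ℝ := ((L:ℝ)+α)/(2*(L:ℝ)) with hp
  set Q : Matrix (Fin (L+1)) (Fin (L+1)) ℝ :=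
    Matrix.of (fun j i : Fin (L+1) => (FP p L (j:ℕ)).coeff (i:ℕ)) with hQdef
  set R : Matrix (Fin (L+1)) (Fin (L+1)) ℝ :=
    Matrix.of (fun n k : Fin (L+1) => (GP p L (n:ℕ)).coeff (k:ℕ)) with hRdef
  have hRQ : R * Q = 1 := by
    ext n i
    rw [Matrix.mul_apply]
    have hterm : ∀ k : Fin (L+1), R n k * Q k i
        = (fun kk : ℕ => (GP p L (n:ℕ)).coeff kk * (aP ^ kk * (bP p) ^ (L - kk)).coeff (i:ℕ)) (k:ℕ) :=
      fun k => rfl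
    rw [Finset.sum_congr rfl (fun k _ => hterm k),
      Fin.sum_univ_eq_sum_range (fun kk : ℕ =>
        (GP p L (n:ℕ)).coeff kk * (aP ^ kk * (bP p) ^ (L - kk)).coeff (i:ℕ)) (L+1)]
    have hcoe : ∑ kk ∈ range (L+1),
        (GP p L (n:ℕ)).coeff kk * (aP ^ kk * (bP p) ^ (L - kk)).coeff (i:ℕ)
        = (homP p L (GP p L (n:ℕ))).coeff (i:ℕ) := by
      unfold homP
      rw [Polynomial.finset_sum_coeff]
      exact Finset.sum_congr rfl fun k _ => by rw [coeff_C_mul]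
    rw [hcoe, homP_GP p L (n:ℕ) (by omega), Polynomial.coeff_X_pow, Matrix.one_apply]
    simp only [Fin.ext_iff, eq_comm]
  have hQR : Q * R = 1 := mul_eq_one_comm.mpr hRQ
  have hQ : IsUnit Q := ⟨⟨Q, R, hQR, hRQ⟩, rfl⟩
  have hQdet : IsUnit Q.det := (Matrix.isUnit_iff_isUnit_det Q).mp hQ
  have hQC : Q * Cmat L α
      = Matrix.diagonal (fun j : Fin (L+1) => (2*((j:ℕ):ℝ)+3)/2) * Q := by
    ext j m
    rw [Matrix.mul_apply, Matrix.diagonal_mul]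
    exact key L hL α j m
  refine ⟨Q⁻¹, ?_, ?_⟩
  · exact (Matrix.isUnit_nonsing_inv_iff).mpr hQ
  · rw [Matrix.nonsing_inv_nonsing_inv Q hQdet]
    calc Cmat L α = Q⁻¹ * Q * Cmat L α := by
          rw [Matrix.nonsing_inv_mul Q hQdet, one_mul]
      _ = Q⁻¹ * (Q * Cmat L α) := by rw [mul_assoc]
      _ = Q⁻¹ * (Matrix.diagonal (fun j : Fin (L+1) => (2*((j:ℕ):ℝ)+3)/2) * Q) := by rw [hQC]
      _ = Q⁻¹ * Matrix.diagonal (fun j : Fin (L+1) => (2*((j:ℕ):ℝ)+3)/2) * Q := by rw [mul_assoc]
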